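/- Let H = (V, E) be a hypergraph, where V is a finite type and E is a finite set of finite subsets of V. A weight w : E → ZMod 2 is a parity weight if and only if for every constraint C ⊆ E, the number of edges e ∈ C with w(e) = 0 is even; equivalently, if and only if for every constraint C, Σ_{e∈C} (w(e) + 1) = 0 in ZMod 2. -/

import Mathlib

open Finset Matrix

lemma dual_eq_dot {K β : Type*} [Field K] [Fintype β] [DecidableEq β]
    (ψ : Module.Dual K (β → K)) (v : β → K) :
    ψ v = (fun b => ψ (Pi.single b 1)) ⬝ᵥ v := by
  have hv : v = ∑ b, v b • (Pi.single b 1 : β → K) := by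
    funext j
    simp [Pi.single_apply, Finset.sum_ite_eq]
  conv_lhs => rw [hv, map_sum]
  simp [dotProduct, mul_comm]

lemma key {K α β : Type*} [Field K] [Fintype α] [Fintype β] [DecidableEq α] [DecidableEq β]
    (M : Matrix α β K) (g : α → K) :
    (∃ h : β → K, M.mulVec h = g) ↔ ∀ x : α → K, Mᵀ.mulVec x = 0 → x ⬝ᵥ g = 0 := by
  constructor
  · rintro ⟨h, rfl⟩ x hx
    rw [Matrix.mulVec_transpose] at hx
    rw [Matrix.dotProduct_mulVec, hx, zero_dotProduct]
  · intro hx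
    let φg : Module.Dual K (α → K) := ∑ a, g a • LinearMap.proj a
    have hφg : ∀ x, φg x = g ⬝ᵥ x := by
      intro x; simp [φg, dotProduct]
    have hmem : φg ∈ (LinearMap.ker (Mᵀ.mulVecLin)).dualAnnihilator := by
      rw [Submodule.mem_dualAnnihilator]
      intro x hxk
      rw [hφg, dotProduct_comm]
      exact hx x (by simpa [Matrix.mulVecLin, Matrix.mulVec_transpose] using hxk)
    rw [← LinearMap.range_dualMap_eq_dualAnnihilator_ker] at hmem
    obtain ⟨ψ, hψ⟩ := hmem
    refine ⟨fun b => ψ (Pi.single b 1), ?_⟩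
    funext a
    have h1 := congrArg (fun φ : Module.Dual K (α → K) => φ (Pi.single a 1)) hψ
    simp only [LinearMap.dualMap_apply', LinearMap.comp_apply] at h1
    have h2 : ψ (Mᵀ.mulVecLin (Pi.single a 1)) =
        (M.mulVec fun b => ψ (Pi.single b 1)) ⬝ᵥ (Pi.single a 1) := by
      rw [dual_eq_dot ψ, Matrix.mulVecLin_apply, Matrix.mulVec_transpose,
        dotProduct_comm, ← Matrix.dotProduct_mulVec, dotProduct_comm]
    rw [h2] at h1
    have h3 : φg (Pi.single a 1) = g a := by rw [hφg, dotProduct_single, mul_one]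
    rw [h3, dotProduct_single, mul_one] at h1
    exact h1

lemma zmod2_even_iff (n : ℕ) : Even n ↔ (n : ZMod 2) = 0 := by
  rw [ZMod.natCast_eq_zero_iff]
  exact even_iff_two_dvd


/-- A weight `w` of the edge set `E` is a parity weight if it arises from a logical weight
`f` of the vertices via `w(e) + 1 = Σ_{v ∈ e} f(v)` in `ZMod 2`. -/
def IsParityWeight {V : Type*} (E : Finset (Finset V)) (w : {e // e ∈ E} → ZMod 2) : Prop :=
  ∃ f : V → ZMod 2, ∀ e : {e // e ∈ E}, w e + 1 = ∑ v ∈ e.1, f v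

/-- A constraint of the hypergraph `(V, E)`: a set of edges such that every vertex is
contained in an even number of its edges. -/
def IsConstraint {V : Type*} [DecidableEq V] (E : Finset (Finset V))
    (C : Finset {e // e ∈ E}) : Prop :=
  ∀ v : V, Even ((C.filter (fun e => v ∈ e.1)).card)

/-- `w` is a parity weight iff for every constraint `C` the number of edges
`e ∈ C` with `w(e) = 0` is even; equivalently, iff `Σ_{e ∈ C} (w(e) + 1) = 0` for every
constraint `C`. -/
theorem parityWeight_iff_constraints {V : Type*} [Fintype V] [DecidableEq V]
    (E : Finset (Finset V)) (w : {e // e ∈ E} → ZMod 2) :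
    (IsParityWeight E w ↔
      ∀ C : Finset {e // e ∈ E}, IsConstraint E C →
        Even ((C.filter (fun e => w e = 0)).card)) ∧
    (IsParityWeight E w ↔
      ∀ C : Finset {e // e ∈ E}, IsConstraint E C → ∑ e ∈ C, (w e + 1) = 0) := by
  classical
  set M : Matrix {e // e ∈ E} V (ZMod 2) := fun e v => if v ∈ e.1 then 1 else 0 with hM
  set g : {e // e ∈ E} → ZMod 2 := fun e => w e + 1 with hg
  let χ : Finset {e // e ∈ E} → ({e // e ∈ E} → ZMod 2) :=
    fun C e => if e ∈ C then 1 else 0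
  have hpw : IsParityWeight E w ↔ ∃ h, M.mulVec h = g := by
    unfold IsParityWeight
    refine exists_congr fun f => ?_
    constructor
    · intro h
      funext e
      rw [hg]
      simp only [Matrix.mulVec, dotProduct, hM, ite_mul, one_mul, zero_mul,
        Finset.sum_ite_mem, Finset.univ_inter]
      exact (h e).symm
    · intro h e
      have := congrFun h e
      simp only [Matrix.mulVec, dotProduct, hM, ite_mul, one_mul, zero_mul,
        Finset.sum_ite_mem, Finset.univ_inter, hg] at this
      exact this.symm
  have hMv : ∀ (C : Finset {e // e ∈ E}) (v : V),
      (Mᵀ.mulVec (χ C)) v = ((C.filter fun e => v ∈ e.1).card : ZMod 2) := by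
    intro C v
    simp only [Matrix.mulVec, dotProduct, Matrix.transpose_apply]
    simp only [hM, χ,
      mul_ite, mul_one, mul_zero, Finset.sum_ite_mem, Finset.univ_inter]
    rw [Finset.sum_boole]
  have hconstraint : ∀ C, IsConstraint E C ↔ Mᵀ.mulVec (χ C) = 0 := by
    intro C
    constructor
    · intro h
      funext v
      rw [hMv]
      exact (zmod2_even_iff _).mp (h v)
    · intro h v
      have := congrFun h v
      rw [hMv] at this
      exact (zmod2_even_iff _).mpr this
  have hdot : ∀ C, χ C ⬝ᵥ g = ∑ e ∈ C, g e := by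
    intro C
    simp only [dotProduct, χ, ite_mul, one_mul, zero_mul, Finset.sum_ite_mem]
    exact Finset.sum_congr (Finset.inter_eq_right.mpr fun x _ => Finset.mem_attach _ _)
      fun _ _ => rfl
  have hkey : IsParityWeight E w ↔ ∀ C, IsConstraint E C → ∑ e ∈ C, g e = 0 := by
    rw [hpw, key]
    constructor
    · intro h C hC
      have := h (χ C) ((hconstraint C).mp hC)
      rwa [hdot] at this
    · intro h x hx
      set C := Finset.univ.filter (fun e => x e = 1) with hC
      have hval : ∀ a : ZMod 2, a ≠ 1 → a = 0 := by decide
      have hxχ : x = χ C := by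
        funext e
        by_cases he : x e = 1
        · simp [χ, hC, he]
        · simp [χ, hC, he, hval _ he]
      rw [hxχ, hdot]
      exact h C ((hconstraint C).mpr (hxχ ▸ hx))
  have hsum_card : ∀ C : Finset {e // e ∈ E},
      (∑ e ∈ C, g e) = (((C.filter fun e => w e = 0)).card : ZMod 2) := by
    intro C
    rw [← Finset.sum_boole]
    refine Finset.sum_congr rfl fun e _ => ?_
    have : ∀ a : ZMod 2, a + 1 = if a = 0 then 1 else 0 := by decide
    exact this (w e)
  constructor
  · rw [hkey]
    refine forall_congr' fun C => imp_congr_right fun _ => ?_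
    rw [hsum_card, zmod2_even_iff]
  · exact hkey
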